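/- Let B be a small category. Under the Isbell adjunction between [Bᵒᵖ, Type*] and [B, Type*]ᵒᵖ given by φ ↦ Hom(φ, Y−) and ψ ↦ Hom(ψ, Y'−), the unit and counit are isomorphisms at small projective objects; consequently the Isbell adjunction restricts to an equivalence between the full subcategory of small projectives of [Bᵒᵖ, Type*] and the opposite of the full subcategory of small projectives of [B, Type*]. -/

import Mathlib

open CategoryTheory Opposite

universe v

variable {B : Type v} [SmallCategory B]

/-- A presheaf is small projective when its covariant hom-functor preserves all small
colimits. -/
def SmallProjPresheaf (φ : Bᵒᵖ ⥤ Type v) : Prop :=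
  Nonempty (Limits.PreservesColimits (coyoneda.obj (op φ)))

/-- A copresheaf is small projective when its covariant hom-functor preserves all small
colimits. -/
def SmallProjCopresheaf (ψ : B ⥤ Type v) : Prop :=
  Nonempty (Limits.PreservesColimits (coyoneda.obj (op ψ)))

universe w w' v₁ v₂ u₁ u₂

open CategoryTheory.Limits

section Retract

variable {C : Type u₁} [Category.{v₁} C] {D : Type u₂} [Category.{v₂} D]

lemma preservesColimit_of_retract {F G : C ⥤ D} (s : F ⟶ G) (p : G ⟶ F) (hsp : s ≫ p = 𝟙 F)
    {J : Type w} [Category.{w'} J] (K : J ⥤ C) [HasColimit K] [HasColimit (K ⋙ F)]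
    [HasColimit (K ⋙ G)] [PreservesColimit K G] : PreservesColimit K F := by
  have sq1 : colimit.post K F ≫ s.app (colimit K) =
      colimMap (Functor.whiskerLeft K s) ≫ colimit.post K G := by
    apply colimit.hom_ext
    intro j
    simp [colimit.ι_post, s.naturality]
  have sq2 : colimMap (Functor.whiskerLeft K p) ≫ colimit.post K F =
      colimit.post K G ≫ p.app (colimit K) := by
    apply colimit.hom_ext
    intro j
    simp [colimit.ι_post, p.naturality]
  have : IsIso (colimit.post K F) := by
    refine ⟨s.app (colimit K) ≫ inv (colimit.post K G) ≫ colimMap (Functor.whiskerLeft K p), ?_, ?_⟩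
    · rw [← Category.assoc, sq1]
      simp only [Category.assoc, IsIso.hom_inv_id_assoc]
      apply colimit.hom_ext
      intro j
      rw [ι_colimMap_assoc, Functor.whiskerLeft_app, ι_colimMap, Functor.whiskerLeft_app, ← Category.assoc,
        ← NatTrans.comp_app, hsp]
      simp
    · simp only [Category.assoc]
      rw [sq2, ← Category.assoc (inv (colimit.post K G)), IsIso.inv_hom_id, Category.id_comp,
        ← NatTrans.comp_app, hsp, NatTrans.id_app]
  exact preservesColimit_of_isIso_post _ _

lemma preservesColimits_of_retract [HasColimitsOfSize.{w, w'} C] [HasColimitsOfSize.{w, w'} D]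
    {F G : C ⥤ D} (s : F ⟶ G) (p : G ⟶ F) (hsp : s ≫ p = 𝟙 F)
    [PreservesColimitsOfSize.{w, w'} G] : PreservesColimitsOfSize.{w, w'} F :=
  ⟨fun {_} _ => ⟨fun {K} => preservesColimit_of_retract s p hsp K⟩⟩

/-- natural transformation iso at a retract -/
lemma isIso_app_of_retract {T : C ⥤ C} (η : 𝟭 C ⟶ T) {φ ρ : C} (i : φ ⟶ ρ) (r : ρ ⟶ φ)
    (hir : i ≫ r = 𝟙 φ) [IsIso (η.app ρ)] : IsIso (η.app φ) := by
  refine ⟨T.map i ≫ inv (η.app ρ) ≫ r, ?_, ?_⟩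
  · have h1 : η.app φ ≫ T.map i = i ≫ η.app ρ := (η.naturality i).symm
    rw [← Category.assoc, h1]
    simp only [Category.assoc, IsIso.hom_inv_id_assoc]
    exact hir
  · have h2 : r ≫ η.app φ = η.app ρ ≫ T.map r := η.naturality r
    simp only [Category.assoc]
    rw [h2, ← Category.assoc (inv (η.app ρ)), IsIso.inv_hom_id, Category.id_comp, ← T.map_comp,
      hir, T.map_id]

end Retract

section Rep

variable {C : Type v} [SmallCategory C]

lemma retract_of_representable (φ : Cᵒᵖ ⥤ Type v)
    (h : PreservesColimits (coyoneda.obj (op φ))) :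
    ∃ (c : C) (i : φ ⟶ yoneda.obj c) (r : yoneda.obj c ⟶ φ), i ≫ r = 𝟙 φ := by
  have hc := isColimitOfPreserves (coyoneda.obj (op φ)) (Presheaf.colimitOfRepresentable φ)
  obtain ⟨j, y, hy⟩ := Types.jointly_surjective _ hc (𝟙 φ)
  exact ⟨j.unop.1.unop, y ≫ (uliftYonedaIsoYoneda.app _).hom,
    (uliftYonedaIsoYoneda.app _).inv ≫ (Presheaf.coconeOfRepresentable φ).ι.app j,
    by erw [Category.assoc, Iso.hom_inv_id_assoc]; exact hy⟩

/-- representables in presheaf categories are small projective -/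
lemma preservesColimits_coyoneda_yoneda (c : C) :
    PreservesColimits (coyoneda.obj (op (yoneda.obj c))) :=
  ⟨fun {_} _ => ⟨fun {_} => inferInstance⟩⟩

/-- corepresentables in copresheaf categories are small projective -/
lemma preservesColimits_coyoneda_coyoneda (c : C) :
    PreservesColimits (coyoneda.obj (op (coyoneda.obj (op c)))) := by
  have e : coyoneda.obj (op (coyoneda.obj (op c))) ≅ (evaluation C (Type v)).obj c :=
    NatIso.ofComponents (fun F => Equiv.toIso coyonedaEquiv)
      (fun {F G} f => by
        ext α
        exact coyonedaEquiv_comp α f)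
  exact preservesColimits_of_natIso e.symm

end Rep

section Copre

lemma retract_of_corepresentable (ψ : B ⥤ Type v)
    (h : PreservesColimits (coyoneda.obj (op ψ))) :
    ∃ (b : B) (i : ψ ⟶ coyoneda.obj (op b)) (r : coyoneda.obj (op b) ⟶ ψ), i ≫ r = 𝟙 ψ := by
  let E : (Bᵒᵖᵒᵖ ⥤ Type v) ≌ (B ⥤ Type v) := (opOpEquivalence B).congrLeft
  let adj : E.inverse ⊣ E.functor := E.symm.toAdjunction
  have hE : PreservesColimits E.functor := E.toAdjunction.leftAdjoint_preservesColimits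
  have h' : PreservesColimits (coyoneda.obj (op (E.inverse.obj ψ))) := by
    have e : coyoneda.obj (op (E.inverse.obj ψ)) ≅ E.functor ⋙ coyoneda.obj (op ψ) :=
      NatIso.ofComponents (fun X => Equiv.toIso (adj.homEquiv ψ X))
        (fun {X Y} g => by
          ext f
          exact adj.homEquiv_naturality_right f g)
    exact preservesColimits_of_natIso e.symm
  obtain ⟨c, i', r', hir'⟩ := retract_of_representable (E.inverse.obj ψ) h'
  -- transport along E
  let cψ : E.functor.obj (E.inverse.obj ψ) ≅ ψ := E.counitIso.app ψ
  let jc : E.functor.obj (yoneda.obj c) ≅ coyoneda.obj (op c.unop) :=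
    NatIso.ofComponents (fun b => Equiv.toIso (opEquiv (op b) c)) (by aesop_cat)
  refine ⟨c.unop, cψ.inv ≫ E.functor.map i' ≫ jc.hom, jc.inv ≫ E.functor.map r' ≫ cψ.hom, ?_⟩
  simp only [Category.assoc, Iso.hom_inv_id_assoc]
  slice_lhs 2 3 => rw [← E.functor.map_comp, hir']
  simp

end Copre

section IsbellCore

/-- Isbell conjugate of a presheaf. -/
abbrev isbellO (φ : Bᵒᵖ ⥤ Type v) : B ⥤ Type v := yoneda ⋙ coyoneda.obj (op φ)

/-- Isbell conjugate of a copresheaf. -/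
abbrev isbellS (ψ : B ⥤ Type v) : Bᵒᵖ ⥤ Type v := coyoneda ⋙ coyoneda.obj (op ψ)

def isbellOMap {φ φ' : Bᵒᵖ ⥤ Type v} (f : φ ⟶ φ') : isbellO φ' ⟶ isbellO φ :=
  Functor.whiskerLeft yoneda (coyoneda.map f.op)

def isbellSMap {ψ ψ' : B ⥤ Type v} (g : ψ ⟶ ψ') : isbellS ψ' ⟶ isbellS ψ :=
  Functor.whiskerLeft coyoneda (coyoneda.map g.op)

def isbellUnit (φ : Bᵒᵖ ⥤ Type v) : φ ⟶ isbellS (isbellO φ) where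
  app b := ↾fun x =>
    { app := fun c => ↾fun y => y.app b x
      naturality := fun c c' f => by
        ext y
        rfl }
  naturality := fun b b' g => by
    ext x
    apply NatTrans.ext
    funext c; ext y
    exact ConcreteCategory.congr_hom (y.naturality g) x

def isbellCounit (ψ : B ⥤ Type v) : ψ ⟶ isbellO (isbellS ψ) where
  app c := ↾fun y =>
    { app := fun b => ↾fun x => x.app c y
      naturality := fun b b' h => by
        ext x
        rfl }
  naturality := fun c c' f => by
    ext y
    apply NatTrans.ext
    funext b; ext x
    exact ConcreteCategory.congr_hom (x.naturality f) y

end IsbellCore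

section IsbellIso

lemma isIso_isbellUnit_yoneda (b : B) : IsIso (isbellUnit (yoneda.obj b)) := by
  have : ∀ b'' : Bᵒᵖ, IsIso ((isbellUnit (yoneda.obj b)).app b'') := by
    intro b''
    rw [isIso_iff_bijective]
    apply Function.bijective_iff_has_inverse.2
    refine ⟨fun θ => θ.app b (𝟙 (yoneda.obj b)), fun x => rfl, fun θ => ?_⟩
    apply NatTrans.ext
    funext c; ext y
    obtain ⟨k, rfl⟩ := yoneda.map_surjective y
    have h := ConcreteCategory.congr_hom (θ.naturality k) (𝟙 (yoneda.obj b))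
    dsimp at h
    rw [Category.id_comp] at h
    exact h.symm
  exact NatIso.isIso_of_isIso_app _

lemma isIso_isbellCounit_coyoneda (b : B) : IsIso (isbellCounit (coyoneda.obj (op b))) := by
  have : ∀ c : B, IsIso ((isbellCounit (coyoneda.obj (op b))).app c) := by
    intro c
    rw [isIso_iff_bijective]
    apply Function.bijective_iff_has_inverse.2
    refine ⟨fun σ => σ.app (op b) (𝟙 (coyoneda.obj (op b))), fun y => rfl, fun σ => ?_⟩
    apply NatTrans.ext
    funext b''; ext x
    obtain ⟨h, rfl⟩ := coyoneda.map_surjective x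
    have hh := ConcreteCategory.congr_hom (σ.naturality h) (𝟙 (coyoneda.obj (op b)))
    dsimp at hh
    rw [Category.id_comp] at hh
    exact hh.symm
  exact NatIso.isIso_of_isIso_app _

def isbellOYonedaIso (b : B) : isbellO (yoneda.obj b) ≅ coyoneda.obj (op b) :=
  NatIso.ofComponents (fun c => Equiv.toIso yonedaEquiv)
    (fun {c c'} f => by
      ext t
      exact yonedaEquiv_comp t (yoneda.map f))

def isbellSCoyonedaIso (b : B) : isbellS (coyoneda.obj (op b)) ≅ yoneda.obj b :=
  NatIso.ofComponents (fun b'' => Equiv.toIso coyonedaEquiv)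
    (fun {b'' b'''} h => by
      ext α
      exact coyonedaEquiv_comp α (coyoneda.map h))

end IsbellIso

section IsbellProj

lemma isbellOMap_comp_eq_id {φ ρ : Bᵒᵖ ⥤ Type v} (i : φ ⟶ ρ) (r : ρ ⟶ φ) (hir : i ≫ r = 𝟙 φ) :
    isbellOMap r ≫ isbellOMap i = 𝟙 (isbellO φ) := by
  dsimp [isbellOMap]
  rw [← Functor.whiskerLeft_comp, ← coyoneda.map_comp, ← op_comp, hir]
  aesop_cat

lemma isbellSMap_comp_eq_id {ψ ρ : B ⥤ Type v} (i : ψ ⟶ ρ) (r : ρ ⟶ ψ) (hir : i ≫ r = 𝟙 ψ) :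
    isbellSMap r ≫ isbellSMap i = 𝟙 (isbellS ψ) := by
  dsimp [isbellSMap]
  rw [← Functor.whiskerLeft_comp, ← coyoneda.map_comp, ← op_comp, hir]
  aesop_cat

lemma coyoneda_preservesColimits_of_retract {C : Type u₁} [Category.{v₁} C]
    [HasColimitsOfSize.{v₁, v₁} C]
    {φ ρ : C} (i : φ ⟶ ρ) (r : ρ ⟶ φ) (hir : i ≫ r = 𝟙 φ)
    (h : PreservesColimitsOfSize.{v₁, v₁} (coyoneda.obj (op ρ))) :
    PreservesColimitsOfSize.{v₁, v₁} (coyoneda.obj (op φ)) := by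
  have hsp : coyoneda.map r.op ≫ coyoneda.map i.op = 𝟙 (coyoneda.obj (op φ)) := by
    rw [← coyoneda.map_comp, ← op_comp, hir]
    simp
  exact preservesColimits_of_retract (coyoneda.map r.op) (coyoneda.map i.op) hsp

lemma smallProj_isbellO {φ : Bᵒᵖ ⥤ Type v} (h : PreservesColimits (coyoneda.obj (op φ))) :
    PreservesColimits (coyoneda.obj (op (isbellO φ))) := by
  obtain ⟨b, i, r, hir⟩ := retract_of_representable φ h
  have h1 : PreservesColimits (coyoneda.obj (op (isbellO (yoneda.obj b)))) := by
    have h0 := preservesColimits_coyoneda_coyoneda (C := B) b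
    exact preservesColimits_of_natIso (coyoneda.mapIso (isbellOYonedaIso b).op)
  exact coyoneda_preservesColimits_of_retract (isbellOMap r) (isbellOMap i)
    (isbellOMap_comp_eq_id i r hir) h1

lemma smallProj_isbellS {ψ : B ⥤ Type v} (h : PreservesColimits (coyoneda.obj (op ψ))) :
    PreservesColimits (coyoneda.obj (op (isbellS ψ))) := by
  obtain ⟨b, i, r, hir⟩ := retract_of_corepresentable ψ h
  have h1 : PreservesColimits (coyoneda.obj (op (isbellS (coyoneda.obj (op b))))) := by
    have h0 := preservesColimits_coyoneda_yoneda (C := B) b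
    exact preservesColimits_of_natIso (coyoneda.mapIso (isbellSCoyonedaIso b).op)
  exact coyoneda_preservesColimits_of_retract (isbellSMap r) (isbellSMap i)
    (isbellSMap_comp_eq_id i r hir) h1

end IsbellProj

section IsbellNat

@[simp]
lemma isbellOMap_id (φ : Bᵒᵖ ⥤ Type v) : isbellOMap (𝟙 φ) = 𝟙 (isbellO φ) := by
  simp [isbellOMap]

@[simp]
lemma isbellOMap_comp {φ φ' φ'' : Bᵒᵖ ⥤ Type v} (f : φ ⟶ φ') (g : φ' ⟶ φ'') :
    isbellOMap (f ≫ g) = isbellOMap g ≫ isbellOMap f := by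
  simp [isbellOMap, ← Functor.whiskerLeft_comp]

@[simp]
lemma isbellSMap_id (ψ : B ⥤ Type v) : isbellSMap (𝟙 ψ) = 𝟙 (isbellS ψ) := by
  simp [isbellSMap]

@[simp]
lemma isbellSMap_comp {ψ ψ' ψ'' : B ⥤ Type v} (f : ψ ⟶ ψ') (g : ψ' ⟶ ψ'') :
    isbellSMap (f ≫ g) = isbellSMap g ≫ isbellSMap f := by
  simp [isbellSMap, ← Functor.whiskerLeft_comp]

def isbellEndo : (Bᵒᵖ ⥤ Type v) ⥤ (Bᵒᵖ ⥤ Type v) where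
  obj φ := isbellS (isbellO φ)
  map f := isbellSMap (isbellOMap f)

def isbellEndoCo : (B ⥤ Type v) ⥤ (B ⥤ Type v) where
  obj ψ := isbellO (isbellS ψ)
  map g := isbellOMap (isbellSMap g)

def isbellUnitNat : 𝟭 (Bᵒᵖ ⥤ Type v) ⟶ isbellEndo where
  app := isbellUnit
  naturality {φ φ'} f := by
    apply NatTrans.ext
    funext b; ext x
    apply NatTrans.ext
    funext c; ext y
    rfl

def isbellCounitNat : 𝟭 (B ⥤ Type v) ⟶ isbellEndoCo where
  app := isbellCounit
  naturality {ψ ψ'} g := by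
    apply NatTrans.ext
    funext c; ext y
    apply NatTrans.ext
    funext b; ext x
    rfl

lemma isIso_isbellUnit {φ : Bᵒᵖ ⥤ Type v} (h : PreservesColimits (coyoneda.obj (op φ))) :
    IsIso (isbellUnit φ) := by
  obtain ⟨b, i, r, hir⟩ := retract_of_representable φ h
  have : IsIso (isbellUnitNat.app (yoneda.obj b)) := isIso_isbellUnit_yoneda b
  exact isIso_app_of_retract isbellUnitNat i r hir

lemma isIso_isbellCounit {ψ : B ⥤ Type v} (h : PreservesColimits (coyoneda.obj (op ψ))) :
    IsIso (isbellCounit ψ) := by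
  obtain ⟨b, i, r, hir⟩ := retract_of_corepresentable ψ h
  have : IsIso (isbellCounitNat.app (coyoneda.obj (op b))) := isIso_isbellCounit_coyoneda b
  exact isIso_app_of_retract isbellCounitNat i r hir

end IsbellNat



def FullSubcategory.isoMk' {C : Type u₁} [Category.{v₁} C] {P : ObjectProperty C}
    {X Y : ObjectProperty.FullSubcategory P} (e : X.obj ≅ Y.obj) : X ≅ Y where
  hom := ObjectProperty.homMk e.hom
  inv := ObjectProperty.homMk e.inv
  hom_inv_id := by ext1; exact e.hom_inv_id
  inv_hom_id := by ext1; exact e.inv_hom_id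

def isbellProjFunctor :
    ObjectProperty.FullSubcategory (SmallProjPresheaf (B := B)) ⥤
      (ObjectProperty.FullSubcategory (SmallProjCopresheaf (B := B)))ᵒᵖ where
  obj X := op ⟨isbellO X.obj, ⟨smallProj_isbellO X.property.some⟩⟩
  map {X Y} f :=
    (show (⟨isbellO Y.obj, ⟨smallProj_isbellO Y.property.some⟩⟩ :
        ObjectProperty.FullSubcategory (SmallProjCopresheaf (B := B))) ⟶
        ⟨isbellO X.obj, ⟨smallProj_isbellO X.property.some⟩⟩ from ObjectProperty.homMk (isbellOMap f.hom)).op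
  map_id X := by
    apply Quiver.Hom.unop_inj
    ext1; exact isbellOMap_id X.obj
  map_comp {X Y Z} f g := by
    apply Quiver.Hom.unop_inj
    ext1; exact isbellOMap_comp f.hom g.hom

def isbellProjInverse :
    (ObjectProperty.FullSubcategory (SmallProjCopresheaf (B := B)))ᵒᵖ ⥤
      ObjectProperty.FullSubcategory (SmallProjPresheaf (B := B)) where
  obj Y := ⟨isbellS Y.unop.obj, ⟨smallProj_isbellS Y.unop.property.some⟩⟩
  map {Y Z} f := ObjectProperty.homMk (isbellSMap f.unop.hom)
  map_id Y := by ext1; exact isbellSMap_id Y.unop.obj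
  map_comp {Y Z W} f g := by ext1; exact isbellSMap_comp g.unop.hom f.unop.hom

noncomputable def isbellProjUnitIso :
    𝟭 (ObjectProperty.FullSubcategory (SmallProjPresheaf (B := B))) ≅ isbellProjFunctor ⋙ isbellProjInverse :=
  NatIso.ofComponents
    (fun X => FullSubcategory.isoMk'
      (@asIso _ _ _ _ (isbellUnit X.obj) (isIso_isbellUnit X.property.some)))
    (fun {X X'} f => by ext1; exact isbellUnitNat.naturality f.hom)

noncomputable def isbellProjCounitIso :
    isbellProjInverse ⋙ isbellProjFunctor ≅ 𝟭 (ObjectProperty.FullSubcategory (SmallProjCopresheaf (B := B)))ᵒᵖ :=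
  NatIso.ofComponents
    (fun Y =>
      (show Y.unop ≅ ⟨isbellO (isbellS Y.unop.obj), ⟨smallProj_isbellO (smallProj_isbellS Y.unop.property.some)⟩⟩ from
        FullSubcategory.isoMk'
          (@asIso _ _ _ _ (isbellCounit Y.unop.obj) (isIso_isbellCounit Y.unop.property.some))).op)
    (fun {Y Y'} f => Quiver.Hom.unop_inj (by ext1; exact (isbellCounitNat.naturality f.unop.hom).symm))

/-- the Isbell adjunction `φ ↦ Hom(φ, Y−)`, `ψ ↦ Hom(ψ, Y'−)` restricts to an
equivalence between the full subcategory of small projectives of `[Bᵒᵖ, Type v]` and the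
opposite of the full subcategory of small projectives of `[B, Type v]`, both functors of the
equivalence being given by Isbell conjugation. -/
theorem isbell_restricts_to_equivalence_on_smallProjectives :
    ∃ e : ObjectProperty.FullSubcategory (SmallProjPresheaf (B := B)) ≌
        (ObjectProperty.FullSubcategory (SmallProjCopresheaf (B := B)))ᵒᵖ,
      (∀ X : ObjectProperty.FullSubcategory (SmallProjPresheaf (B := B)),
          Nonempty ((e.functor.obj X).unop.obj ≅ yoneda ⋙ coyoneda.obj (op X.obj))) ∧
        (∀ Y : (ObjectProperty.FullSubcategory (SmallProjCopresheaf (B := B)))ᵒᵖ,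
          Nonempty ((e.inverse.obj Y).obj ≅ coyoneda ⋙ coyoneda.obj (op Y.unop.obj))) :=
  ⟨CategoryTheory.Equivalence.mk isbellProjFunctor isbellProjInverse isbellProjUnitIso isbellProjCounitIso,
    fun X => ⟨Iso.refl _⟩, fun Y => ⟨Iso.refl _⟩⟩
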